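/- Let A be an n×n non-negative matrix with all entries at most 1. Then the real part of every complex eigenvalue of A is at least −n/2. -/

import Mathlib

open Matrix Polynomial

lemma quad_lb (n : ℕ) (A : Matrix (Fin n) (Fin n) ℝ)
    (hA : ∀ i j, 0 ≤ A i j ∧ A i j ≤ 1) (x : Fin n → ℝ) :
    -((n : ℝ)/2) * ∑ i, x i ^ 2 ≤ ∑ i, ∑ j, A i j * (x i * x j) := by
  set p : Fin n → ℝ := fun i => max (x i) 0 with hp
  set m : Fin n → ℝ := fun i => max (-(x i)) 0 with hm
  have hpn : ∀ i, 0 ≤ p i := fun i => le_max_right _ _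
  have hmn : ∀ i, 0 ≤ m i := fun i => le_max_right _ _
  have hx : ∀ i, x i = p i - m i := by
    intro i
    rcases le_total 0 (x i) with h | h
    · rw [show p i = x i from max_eq_left h,
        show m i = (0:ℝ) from max_eq_right (neg_nonpos.2 h)]; ring
    · rw [show p i = (0:ℝ) from max_eq_right h,
        show m i = -(x i) from max_eq_left (neg_nonneg.2 h)]; ring
  have habs : ∀ i, p i + m i = |x i| := by
    intro i
    rcases le_total 0 (x i) with h | h
    · rw [show p i = x i from max_eq_left h,
        show m i = (0:ℝ) from max_eq_right (neg_nonpos.2 h), abs_of_nonneg h]; ring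
    · rw [show p i = (0:ℝ) from max_eq_right h,
        show m i = -(x i) from max_eq_left (neg_nonneg.2 h), abs_of_nonpos h]; ring
  have hterm : ∀ i j, -(p i * m j + m i * p j) ≤ A i j * (x i * x j) := by
    intro i j
    obtain ⟨h0, h1⟩ := hA i j
    rw [hx i, hx j]
    nlinarith [mul_nonneg h0 (add_nonneg (mul_nonneg (hpn i) (hpn j)) (mul_nonneg (hmn i) (hmn j))),
      mul_nonneg (sub_nonneg.2 h1) (add_nonneg (mul_nonneg (hpn i) (hmn j)) (mul_nonneg (hmn i) (hpn j)))]
  set P := ∑ i, p i with hP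
  set Q := ∑ i, m i with hQ
  have e1 : P * Q = ∑ i, ∑ j, p i * m j := Finset.sum_mul_sum _ _ _ _
  have e2 : Q * P = ∑ i, ∑ j, m i * p j := Finset.sum_mul_sum _ _ _ _
  have hsum : -(P * Q + Q * P) ≤ ∑ i, ∑ j, A i j * (x i * x j) := by
    calc -(P * Q + Q * P) = ∑ i, ∑ j, -(p i * m j + m i * p j) := by
          rw [e1, e2]
          simp [← Finset.sum_add_distrib, ← Finset.sum_neg_distrib]
      _ ≤ _ := Finset.sum_le_sum fun i _ => Finset.sum_le_sum fun j _ => hterm i j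
  have hPQ : (P + Q) ^ 2 ≤ (n : ℝ) * ∑ i, x i ^ 2 := by
    have h1 : P + Q = ∑ i, |x i| := by
      rw [hP, hQ, ← Finset.sum_add_distrib]
      exact Finset.sum_congr rfl fun i _ => habs i
    have h2 := sq_sum_le_card_mul_sum_sq (s := (Finset.univ : Finset (Fin n))) (f := fun i => |x i|)
    rw [h1]
    calc (∑ i, |x i|) ^ 2 ≤ ((Finset.univ : Finset (Fin n)).card : ℝ) * ∑ i, |x i| ^ 2 := by
          exact_mod_cast h2
      _ = (n : ℝ) * ∑ i, x i ^ 2 := by simp [sq_abs]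
  have hPn : 0 ≤ P := Finset.sum_nonneg fun i _ => hpn i
  have hQn : 0 ≤ Q := Finset.sum_nonneg fun i _ => hmn i
  nlinarith [sq_nonneg (P - Q), hsum, hPQ]

theorem re_lower_bound (n : ℕ) (A : Matrix (Fin n) (Fin n) ℝ)
    (hA : ∀ i j, 0 ≤ A i j ∧ A i j ≤ 1)
    (μ : ℂ) (hμ : μ ∈ ((A.map Complex.ofReal).charpoly).roots) :
    -(n / 2 : ℝ) ≤ μ.re := by
  set B := A.map Complex.ofReal with hB
  -- eigenvector
  obtain ⟨v, hv, heig⟩ : ∃ v : Fin n → ℂ, v ≠ 0 ∧ B *ᵥ v = μ • v := by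
    have hroot : B.charpoly.IsRoot μ := (Polynomial.mem_roots'.mp hμ).2
    have hdet : (scalar (Fin n) μ - B).det = 0 := by
      have := hroot
      rw [Polynomial.IsRoot, Matrix.charpoly, _root_.eval_det, matPolyEquiv_charmatrix] at this
      simpa using this
    obtain ⟨v, hv, hmul⟩ := (Matrix.exists_mulVec_eq_zero_iff).mpr hdet
    refine ⟨v, hv, ?_⟩
    have h1 : (scalar (Fin n) μ) *ᵥ v - B *ᵥ v = 0 := by rw [← Matrix.sub_mulVec]; exact hmul
    have h2 : (scalar (Fin n) μ) *ᵥ v = μ • v := by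
      ext i; simp [Matrix.scalar, mulVec_diagonal, Pi.algebraMap_apply]
    rw [← h2, eq_comm, ← sub_eq_zero]
    exact h1
  set x : Fin n → ℝ := fun i => (v i).re with hxdef
  set y : Fin n → ℝ := fun i => (v i).im with hydef
  set S : ℝ := ∑ i, Complex.normSq (v i) with hSdef
  have hS : 0 < S := by
    obtain ⟨i, hi⟩ := Function.ne_iff.mp hv
    exact Finset.sum_pos' (fun j _ => Complex.normSq_nonneg _)
      ⟨i, Finset.mem_univ i, Complex.normSq_pos.mpr hi⟩
  have hvv : star v ⬝ᵥ v = (S : ℂ) := by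
    rw [hSdef]
    push_cast
    simp [dotProduct, Complex.normSq_eq_conj_mul_self]
  have hdot : star v ⬝ᵥ (B *ᵥ v) = μ * (S : ℂ) := by
    rw [heig, dotProduct_smul, hvv, smul_eq_mul]
  have hre : (star v ⬝ᵥ (B *ᵥ v)).re = ∑ i, ∑ j, A i j * (x i * x j + y i * y j) := by
    simp only [dotProduct, mulVec, dotProduct, Finset.mul_sum, Complex.re_sum]
    refine Finset.sum_congr rfl fun i _ => Finset.sum_congr rfl fun j _ => ?_
    simp [hB, Complex.mul_re, Complex.mul_im, hxdef, hydef]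
    ring
  have hre2 : (star v ⬝ᵥ (B *ᵥ v)).re = μ.re * S := by
    rw [hdot]; simp [Complex.mul_re]
  have hxy : ∑ i, ∑ j, A i j * (x i * x j + y i * y j)
      = (∑ i, ∑ j, A i j * (x i * x j)) + ∑ i, ∑ j, A i j * (y i * y j) := by
    rw [← Finset.sum_add_distrib]
    refine Finset.sum_congr rfl fun i _ => ?_
    rw [← Finset.sum_add_distrib]
    exact Finset.sum_congr rfl fun j _ => by ring
  have hSsplit : S = (∑ i, x i ^ 2) + ∑ i, y i ^ 2 := by
    rw [hSdef, ← Finset.sum_add_distrib]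
    exact Finset.sum_congr rfl fun i _ => by simp [Complex.normSq_apply, hxdef, hydef]; ring
  have h1 := quad_lb n A hA x
  have h2 := quad_lb n A hA y
  have key : -((n : ℝ)/2) * S ≤ μ.re * S := by
    rw [← hre2, hre, hxy, hSsplit]
    linarith
  have := (mul_le_mul_iff_of_pos_right hS).mp key
  linarith
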